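/- Let M = [a,b]^n ⊂ ℝ^n with the Euclidean metric. The maximal Fréchet variance of any Borel probability measure on M is n(b−a)²/4, achieved by the measure placing equal mass 2^{−n} on each of the 2^n corner points of the cube. -/

import Mathlib

open MeasureTheory

lemma sum_eval_bool {n : ℕ} (i : Fin n) (h : Bool → ℝ) :
    ∑ s : Fin n → Bool, h (s i) = 2^(n-1) * (h true + h false) := by
  rw [← (Equiv.piSplitAt i (fun _ => Bool)).symm.sum_comp]
  simp [Fintype.sum_prod_type, Equiv.piSplitAt_symm_apply]
  ring

lemma euclid_norm_sq (n : ℕ) (x : EuclideanSpace ℝ (Fin n)) : ‖x‖^2 = ∑ i, x i ^ 2 := by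
  rw [EuclideanSpace.norm_eq, Real.sq_sqrt (by positivity)]
  simp [sq_abs]

/-- On the cube [a,b]^n with the Euclidean metric, the maximal Fréchet variance of a
Borel probability measure is n(b-a)²/4, achieved by equal mass 2^{-n} on the 2^n corners. -/
theorem frechetVariance_cube_max (n : ℕ) (a b : ℝ) (hab : a < b) :
    (∀ π : Measure (EuclideanSpace ℝ (Fin n)), IsProbabilityMeasure π →
      π {x : EuclideanSpace ℝ (Fin n) | ∀ i, x i ∈ Set.Icc a b}ᶜ = 0 →
      (⨅ α : {x : EuclideanSpace ℝ (Fin n) | ∀ i, x i ∈ Set.Icc a b},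
          ∫ x, ‖x - (α : EuclideanSpace ℝ (Fin n))‖ ^ 2 ∂π)
        ≤ n * (b - a) ^ 2 / 4) ∧
    (⨅ α : {x : EuclideanSpace ℝ (Fin n) | ∀ i, x i ∈ Set.Icc a b},
        ∫ x, ‖x - (α : EuclideanSpace ℝ (Fin n))‖ ^ 2
          ∂((2 ^ n : ENNReal)⁻¹ • ∑ s : Fin n → Bool,
              Measure.dirac ((WithLp.equiv 2 (Fin n → ℝ)).symm
                (fun i => if s i then b else a))))
      = n * (b - a) ^ 2 / 4 := by
  set S := {x : EuclideanSpace ℝ (Fin n) | ∀ i, x i ∈ Set.Icc a b} with hS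
  set c : EuclideanSpace ℝ (Fin n) :=
    (WithLp.equiv 2 (Fin n → ℝ)).symm (fun _ => (a + b) / 2) with hc
  have hcS : c ∈ S := by
    intro i
    constructor <;> [skip; skip] <;>
      · show _ ≤ _
        change _ ≤ _ at *
        first
          | (show a ≤ (a + b) / 2; linarith)
          | (show (a + b) / 2 ≤ b; linarith)
  haveI : Nonempty S := ⟨⟨c, hcS⟩⟩
  have hcont : ∀ α : EuclideanSpace ℝ (Fin n),
      Continuous fun x : EuclideanSpace ℝ (Fin n) => ‖x - α‖ ^ 2 := by
    intro α; fun_prop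
  constructor
  · intro π hπ hπc
    have hae : ∀ᵐ x ∂π, x ∈ S := by
      rw [ae_iff]
      exact hπc
    have hbound : ∀ᵐ x ∂π, ‖x - c‖ ^ 2 ≤ n * (b - a) ^ 2 / 4 := by
      filter_upwards [hae] with x hx
      rw [euclid_norm_sq]
      have key : ∀ i, (x - c) i ^ 2 ≤ (b - a) ^ 2 / 4 := by
        intro i
        have h1 := (hx i).1
        have h2 := (hx i).2
        have hxi : (x - c) i = x i - (a + b) / 2 := rfl
        rw [hxi]
        nlinarith
      calc ∑ i, (x - c) i ^ 2 ≤ ∑ _i : Fin n, (b - a) ^ 2 / 4 :=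
            Finset.sum_le_sum (fun i _ => key i)
        _ = n * (b - a) ^ 2 / 4 := by simp; ring
    have hint : Integrable (fun x => ‖x - c‖ ^ 2) π := by
      refine Integrable.mono' (integrable_const (n * (b - a) ^ 2 / 4))
        (hcont c).aestronglyMeasurable ?_
      filter_upwards [hbound] with x hx
      rwa [Real.norm_eq_abs, abs_of_nonneg (by positivity)]
    have hle : ∫ x, ‖x - c‖ ^ 2 ∂π ≤ n * (b - a) ^ 2 / 4 := by
      calc ∫ x, ‖x - c‖ ^ 2 ∂π ≤ ∫ _x, n * (b - a) ^ 2 / 4 ∂π :=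
            integral_mono_ae hint (integrable_const _) hbound
        _ = n * (b - a) ^ 2 / 4 := by simp
    refine ciInf_le_of_le ⟨0, ?_⟩ ⟨c, hcS⟩ hle
    rintro y ⟨α, rfl⟩
    exact integral_nonneg fun x => by positivity
  · set corner : (Fin n → Bool) → EuclideanSpace ℝ (Fin n) :=
      fun s => (WithLp.equiv 2 (Fin n → ℝ)).symm (fun i => if s i then b else a)
      with hcorner
    set μ := ((2 ^ n : ENNReal)⁻¹ • ∑ s : Fin n → Bool, Measure.dirac (corner s)) with hμ
    have hI : ∀ α : EuclideanSpace ℝ (Fin n),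
        ∫ x, ‖x - α‖ ^ 2 ∂μ = ∑ i, ((b - α i) ^ 2 + (a - α i) ^ 2) / 2 := by
      intro α
      rw [hμ, integral_smul_measure, integral_finset_sum_measure
        (fun s _ => ((integrable_const (‖corner s - α‖ ^ 2)).congr
          (ae_eq_dirac (fun x => ‖x - α‖ ^ 2)).symm))]
      have hdirac : ∀ s : Fin n → Bool,
          ∫ x, ‖x - α‖ ^ 2 ∂(Measure.dirac (corner s)) = ‖corner s - α‖ ^ 2 :=
        fun s => integral_dirac _ _
      simp only [hdirac]
      have hnorm : ∀ s : Fin n → Bool,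
          ‖corner s - α‖ ^ 2 = ∑ i, ((if s i then b else a) - α i) ^ 2 := by
        intro s
        rw [euclid_norm_sq]
        congr 1
      simp only [hnorm]
      rw [Finset.sum_comm]
      have htoReal : ((2 ^ n : ENNReal)⁻¹).toReal = ((2:ℝ) ^ n)⁻¹ := by
        simp [ENNReal.toReal_inv]
      rw [htoReal, smul_eq_mul, Finset.mul_sum]
      refine Finset.sum_congr rfl (fun i _ => ?_)
      rw [sum_eval_bool i (fun v => ((if v then b else a) - α i) ^ 2)]
      have hn : (2:ℝ) ^ n = 2 ^ (n - 1) * 2 := by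
        rw [← pow_succ, Nat.sub_add_cancel i.pos]
      rw [hn]
      have h2 : (0:ℝ) < 2 ^ (n-1) := by positivity
      field_simp
      simp only [↓reduceIte, Bool.false_eq_true]
    have hge : ∀ α : S, n * (b - a) ^ 2 / 4 ≤
        ∫ x, ‖x - (α : EuclideanSpace ℝ (Fin n))‖ ^ 2 ∂μ := by
      intro α
      rw [hI]
      have key : ∀ i : Fin n, (b - a) ^ 2 / 4 ≤
          ((b - (α : EuclideanSpace ℝ (Fin n)) i) ^ 2
            + (a - (α : EuclideanSpace ℝ (Fin n)) i) ^ 2) / 2 := by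
        intro i
        nlinarith [sq_nonneg ((b - (α : EuclideanSpace ℝ (Fin n)) i)
          + (a - (α : EuclideanSpace ℝ (Fin n)) i))]
      calc (n : ℝ) * (b - a) ^ 2 / 4 = ∑ _i : Fin n, (b - a) ^ 2 / 4 := by simp; ring
        _ ≤ _ := Finset.sum_le_sum (fun i _ => key i)
    have hcval : ∫ x, ‖x - c‖ ^ 2 ∂μ = n * (b - a) ^ 2 / 4 := by
      rw [hI]
      have : ∀ i : Fin n, ((b - c i) ^ 2 + (a - c i) ^ 2) / 2 = (b - a) ^ 2 / 4 := by
        intro i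
        have hci : c i = (a + b) / 2 := rfl
        rw [hci]; ring
      rw [Finset.sum_congr rfl (fun i _ => this i)]
      simp; ring
    refine le_antisymm (ciInf_le_of_le ⟨n * (b - a) ^ 2 / 4, ?_⟩ ⟨c, hcS⟩ hcval.le)
      (le_ciInf hge)
    rintro y ⟨α, rfl⟩
    exact hge α
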